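/- Let L ≥ 3 and define a_k = 1 if k ≡ 0 or 1 (mod L), a_k = 3 if k ≡ -1 (mod L), and a_k = 4 otherwise. Then the denominators t_k of the convergents of [a_0,a_1,...] satisfy t_k ≡ 0 (mod 4) if k ≡ -1 (mod L), and t_k ≡ 1 (mod 4) otherwise. -/
import Mathlib


/-- Numerators of continued fraction convergents: `cfS a k = s_k`
(with `s_{-1} = 1`, `s_0 = a_0`, `s_k = a_k s_{k-1} + s_{k-2}`). -/
def cfS (a : ℕ → ℤ) : ℕ → ℤ
  | 0 => a 0
  | 1 => a 1 * a 0 + 1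
  | (k+2) => a (k+2) * cfS a (k+1) + cfS a k

/-- Denominators of continued fraction convergents: `cfT a k = t_k`
(with `t_{-1} = 0`, `t_0 = 1`, `t_k = a_k t_{k-1} + t_{k-2}`). -/
def cfT (a : ℕ → ℤ) : ℕ → ℤ
  | 0 => 1
  | 1 => a 1
  | (k+2) => a (k+2) * cfT a (k+1) + cfT a k

theorem denominators_mod_four_star_construction
    (L : ℕ) (hL : 3 ≤ L)
    (a : ℕ → ℤ)
    (ha1 : ∀ k, (k % L = 0 ∨ k % L = 1) → a k = 1)
    (ha3 : ∀ k, k % L = L - 1 → a k = 3)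
    (ha4 : ∀ k, ¬(k % L = 0 ∨ k % L = 1) → k % L ≠ L - 1 → a k = 4) :
    ∀ k, (k % L = L - 1 → cfT a k ≡ 0 [ZMOD 4]) ∧
      (k % L ≠ L - 1 → cfT a k ≡ 1 [ZMOD 4]) := by
  have key : ∀ k, ((k % L = L - 1 → cfT a k % 4 = 0) ∧
      (k % L ≠ L - 1 → cfT a k % 4 = 1)) ∧
      (((k+1) % L = L - 1 → cfT a (k+1) % 4 = 0) ∧
      ((k+1) % L ≠ L - 1 → cfT a (k+1) % 4 = 1)) := by
    intro k
    induction k with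
    | zero =>
      have h0 : 0 % L = 0 := Nat.zero_mod L
      have h1 : (0+1) % L = 1 := Nat.mod_eq_of_lt (by omega)
      have hT0 : cfT a 0 = 1 := rfl
      have hT1 : cfT a (0+1) = a 1 := rfl
      have ha : a 1 = 1 := ha1 1 (Or.inr (Nat.mod_eq_of_lt (by omega)))
      exact ⟨⟨fun h => by omega, fun _ => by rw [hT0]; rfl⟩,
             ⟨fun h => by omega, fun _ => by rw [hT1, ha]; rfl⟩⟩
    | succ k ih =>
      refine ⟨ih.2, ?_⟩
      show ((k+2) % L = L - 1 → cfT a (k+2) % 4 = 0) ∧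
        ((k+2) % L ≠ L - 1 → cfT a (k+2) % 4 = 1)
      have hrec : cfT a (k+2) = a (k+2) * cfT a (k+1) + cfT a k := rfl
      have hr : k % L < L := Nat.mod_lt _ (by omega)
      have e1 : 1 % L = 1 := Nat.mod_eq_of_lt (by omega)
      have e2 : 2 % L = 2 := Nat.mod_eq_of_lt (by omega)
      have h1 : (k+1) % L = (k % L + 1) % L := by rw [Nat.add_mod, e1]
      have h2 : (k+2) % L = (k % L + 2) % L := by rw [Nat.add_mod, e2]
      rcases Nat.lt_or_ge (k % L + 2) L with hc | hc
      · -- r + 2 < L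
        have h2v : (k+2) % L = k % L + 2 := h2.trans (Nat.mod_eq_of_lt hc)
        have h1v : (k+1) % L = k % L + 1 := h1.trans (Nat.mod_eq_of_lt (by omega))
        have hTk : cfT a k % 4 = 1 := ih.1.2 (by omega)
        by_cases hr3 : k % L = L - 3
        · -- a (k+2) = 3
          have hA : a (k+2) = 3 := ha3 _ (by omega)
          have hTk1 : cfT a (k+1) % 4 = 1 := ih.2.2 (by omega)
          rw [hrec, hA]
          exact ⟨fun _ => by omega, fun h => by omega⟩
        · -- a (k+2) = 4
          have hA : a (k+2) = 4 := ha4 _ (by omega) (by omega)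
          rw [hrec, hA]
          exact ⟨fun h => by omega, fun _ => by omega⟩
      · rcases Nat.lt_or_ge (k % L + 1) L with hc1 | hc1
        · -- r = L - 2 : (k+2) % L = 0
          have hrv : k % L + 2 = L := by omega
          have h2v : (k+2) % L = 0 := by rw [h2, hrv, Nat.mod_self]
          have h1v : (k+1) % L = k % L + 1 := h1.trans (Nat.mod_eq_of_lt hc1)
          have hA : a (k+2) = 1 := ha1 _ (Or.inl h2v)
          have hTk1 : cfT a (k+1) % 4 = 0 := ih.2.1 (by omega)
          have hTk : cfT a k % 4 = 1 := ih.1.2 (by omega)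
          rw [hrec, hA]
          exact ⟨fun h => by omega, fun _ => by omega⟩
        · -- r = L - 1 : (k+2) % L = 1, (k+1) % L = 0
          have hrv : k % L + 1 = L := by omega
          have h1v : (k+1) % L = 0 := by rw [h1, hrv, Nat.mod_self]
          have h2v : (k+2) % L = 1 := by
            rw [h2, show k % L + 2 = L + 1 by omega, Nat.add_mod, Nat.mod_self,
              e1, Nat.zero_add, e1]
          have hA : a (k+2) = 1 := ha1 _ (Or.inr h2v)
          have hTk1 : cfT a (k+1) % 4 = 1 := ih.2.2 (by omega)
          have hTk : cfT a k % 4 = 0 := ih.1.1 (by omega)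
          rw [hrec, hA]
          exact ⟨fun h => by omega, fun _ => by omega⟩
  intro k
  refine ⟨fun h => ?_, fun h => ?_⟩
  · have := (key k).1.1 h
    show Int.ModEq _ _ _
    unfold Int.ModEq
    omega
  · have := (key k).1.2 h
    show Int.ModEq _ _ _
    unfold Int.ModEq
    omega
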